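/- If a Hermitian k×k matrix A is conditionally positive definite, then for every p > 0 the matrix with entries e^{p a_{ij}} (entrywise exponential) is positive semidefinite. -/

import Mathlib

open Finset

lemma stmt13_gram_pow_nonneg {m k : ℕ} (M : Matrix (Fin m) (Fin k) ℝ) (x : Fin k → ℝ) (n : ℕ) :
    0 ≤ ∑ i, ∑ j, x i * (∑ l, M l i * M l j) ^ n * x j := by
  have key : ∑ i, ∑ j, x i * (∑ l, M l i * M l j) ^ n * x j
      = ∑ f : Fin n → Fin m, (∑ i, x i * ∏ t, M (f t) i) ^ 2 := by
    calc ∑ i, ∑ j, x i * (∑ l, M l i * M l j) ^ n * x j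
        = ∑ i, ∑ j, ∑ f : Fin n → Fin m,
            x i * ((∏ t, M (f t) i) * ∏ t, M (f t) j) * x j := by
          simp_rw [Fintype.sum_pow, Finset.prod_mul_distrib, Finset.mul_sum, Finset.sum_mul]
      _ = ∑ f : Fin n → Fin m, ∑ i, ∑ j,
            x i * ((∏ t, M (f t) i) * ∏ t, M (f t) j) * x j := by
          rw [Finset.sum_congr rfl fun i _ => Finset.sum_comm]
          exact Finset.sum_comm
      _ = ∑ f : Fin n → Fin m, (∑ i, x i * ∏ t, M (f t) i) ^ 2 := by
          refine Finset.sum_congr rfl fun f _ => ?_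
          rw [sq, Finset.sum_mul_sum]
          exact Finset.sum_congr rfl fun i _ => Finset.sum_congr rfl fun j _ => by ring
  rw [key]
  exact Finset.sum_nonneg fun f _ => sq_nonneg _

lemma stmt13_psd_pow_nonneg {k : ℕ} (C : Matrix (Fin k) (Fin k) ℝ) (hC : C.PosSemidef)
    (x : Fin k → ℝ) (n : ℕ) : 0 ≤ ∑ i, ∑ j, x i * (C i j) ^ n * x j := by
  obtain ⟨m, M, rfl⟩ : ∃ (m : ℕ) (M : Matrix (Fin m) (Fin k) ℝ), C = M.conjTranspose * M := by
    obtain ⟨m, v, hv⟩ := Matrix.posSemidef_iff_eq_sum_vecMulVec.mp hC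
    refine ⟨m, Matrix.of fun l i => v l i, ?_⟩
    rw [hv]; ext i j
    simp [Matrix.mul_apply, Matrix.vecMulVec_apply, Matrix.sum_apply, mul_comm]
  have h : ∀ i j, (M.conjTranspose * M) i j = ∑ l, M l i * M l j := by
    intro i j
    simp [Matrix.mul_apply, Matrix.conjTranspose_apply]
  simp_rw [h]
  exact stmt13_gram_pow_nonneg M x n

lemma stmt13_exp_quad_nonneg {k : ℕ} (C : Matrix (Fin k) (Fin k) ℝ) (hC : C.PosSemidef)
    (x : Fin k → ℝ) : 0 ≤ ∑ i, ∑ j, x i * Real.exp (C i j) * x j := by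
  have hsum : ∀ i j : Fin k, Summable fun n : ℕ => x i * ((C i j) ^ n / n.factorial) * x j :=
    fun i j => ((Real.summable_pow_div_factorial (C i j)).mul_left (x i)).mul_right (x j)
  have hexp : ∀ i j, Real.exp (C i j) = ∑' n : ℕ, (C i j) ^ n / n.factorial := by
    intro i j
    rw [Real.exp_eq_exp_ℝ, NormedSpace.exp_eq_tsum_div]
  calc ∑ i, ∑ j, x i * Real.exp (C i j) * x j
      = ∑ i, ∑ j, ∑' n : ℕ, x i * ((C i j) ^ n / n.factorial) * x j := by
        simp_rw [hexp, ← tsum_mul_left, ← tsum_mul_right]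
    _ = ∑' n : ℕ, ∑ i, ∑ j, x i * ((C i j) ^ n / n.factorial) * x j := by
        rw [Finset.sum_congr rfl fun i _ => (Summable.tsum_finsetSum fun j _ => hsum i j).symm]
        exact (Summable.tsum_finsetSum fun i _ => summable_sum fun j _ => hsum i j).symm
    _ ≥ 0 := by
        refine tsum_nonneg fun n => ?_
        have h2 : ∑ i, ∑ j, x i * ((C i j) ^ n / n.factorial) * x j
            = (∑ i, ∑ j, x i * (C i j) ^ n * x j) / n.factorial := by
          rw [Finset.sum_div]
          exact Finset.sum_congr rfl fun i _ => by
            rw [Finset.sum_div]; exact Finset.sum_congr rfl fun j _ => by ring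
        rw [h2]
        exact div_nonneg (stmt13_psd_pow_nonneg C hC x n) (by positivity)

lemma stmt13_center {k : ℕ} (A : Matrix (Fin k) (Fin k) ℝ) (e : Fin k) (z : Fin k → ℝ) :
    (∑ i, ∑ j, (z i - (if i = e then (∑ l, z l) else 0)) * A i j *
        (z j - (if j = e then (∑ l, z l) else 0)))
      = ∑ i, ∑ j, z i * (A i j - A i e - A e j + A e e) * z j := by
  have expand : ∀ i j : Fin k,
      (z i - (if i = e then (∑ l, z l) else 0)) * A i j *
        (z j - (if j = e then (∑ l, z l) else 0))
      = z i * A i j * z j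
        - (if i = e then (∑ l, z l) * A i j * z j else 0)
        - (if j = e then z i * A i j * (∑ l, z l) else 0)
        + (if i = e then (if j = e then (∑ l, z l) * A i j * (∑ l, z l) else 0) else 0) := by
    intro i j
    by_cases hi : i = e <;> by_cases hj : j = e <;> simp [hi, hj] <;> ring
  simp_rw [expand]
  simp only [Finset.sum_sub_distrib, Finset.sum_add_distrib, Finset.sum_ite_irrel,
    Finset.sum_const_zero, Finset.sum_ite_eq']
  simp only [mul_sub, mul_add, sub_mul, add_mul, Finset.sum_sub_distrib, Finset.sum_add_distrib]
  simp only [Finset.mul_sum, Finset.sum_mul, Finset.mem_univ, if_true]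
  rw [Finset.sum_comm (f := fun x i => z i * A e x * z x),
    Finset.sum_comm (f := fun x i => z i * A e e * z x)]
  ring

theorem stmt13 (k : ℕ) (A : Matrix (Fin k) (Fin k) ℝ) (hsymm : A.IsSymm)
    (hcpd : ∀ x : Fin k → ℝ, (∑ i, x i) = 0 → 0 ≤ ∑ i, ∑ j, x i * A i j * x j)
    (p : ℝ) (hp : 0 < p) :
    ∀ x : Fin k → ℝ, 0 ≤ ∑ i, ∑ j, x i * Real.exp (p * A i j) * x j := by
  intro x
  rcases Nat.eq_zero_or_pos k with hk | hk
  · subst hk; simp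
  have hA : ∀ i j, A j i = A i j := fun i j => by
    conv_lhs => rw [← hsymm]
    rfl
  set e : Fin k := ⟨0, hk⟩
  set C : Matrix (Fin k) (Fin k) ℝ :=
    Matrix.of fun i j => p * A i j - p * A i e - p * A e j + p * A e e with hCdef
  have hCapp : ∀ i j, C i j = p * A i j - p * A i e - p * A e j + p * A e e := fun i j => rfl
  have hquad : ∀ z : Fin k → ℝ, 0 ≤ ∑ i, ∑ j, z i * C i j * z j := by
    intro z
    have hy0 : ∑ i, (z i - (if i = e then (∑ l, z l) else 0)) = 0 := by
      simp [Finset.sum_sub_distrib, Finset.sum_ite_eq']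
    have := hcpd _ hy0
    rw [stmt13_center A e z] at this
    calc (0:ℝ) ≤ p * ∑ i, ∑ j, z i * (A i j - A i e - A e j + A e e) * z j :=
          mul_nonneg hp.le this
      _ = ∑ i, ∑ j, z i * C i j * z j := by
          rw [Finset.mul_sum]
          refine Finset.sum_congr rfl fun i _ => ?_
          rw [Finset.mul_sum]
          refine Finset.sum_congr rfl fun j _ => ?_
          rw [hCapp]; ring
  have hCpsd : C.PosSemidef := by
    constructor
    · ext i j
      simp only [Matrix.conjTranspose_apply, Matrix.of_apply, RCLike.star_def, starRingEnd_apply,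
        star_trivial, hCapp]
      rw [hA j i, hA j e, hA i e]
      ring
    · intro z
      have := hquad z
      simpa [dotProduct, Matrix.mulVec, Finset.mul_sum, mul_assoc, Finsupp.sum_fintype] using this
  set d : Fin k → ℝ := fun i => Real.exp (p * A i e - p * A e e / 2) with hd
  have hfac : ∀ i j, x i * Real.exp (p * A i j) * x j
      = (x i * d i) * Real.exp (C i j) * (x j * d j) := by
    intro i j
    have h3 : Real.exp (C i j) * (d i * d j) = Real.exp (p * A i j) := by
      simp only [hd, ← Real.exp_add]
      congr 1
      rw [hCapp, hA e j]
      ring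
    rw [← h3]; ring
  simp_rw [hfac]
  exact stmt13_exp_quad_nonneg C hCpsd (fun i => x i * d i)
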